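/- Fix p₀*, p₁*, p₂* > 0 with p₀* + p₁* + p₂* < 1, arising from a valid two-item model. For every s with p₁*/p₀* < s < (1 - p₀* - p₂*)/p₀*, the weights w_{11} = s, w_{22} = 1/p₀* - 1 - s, w_{21} = (1 - p₀* - p₂* - p₀* s)/(p₂* s), w_{12} = (p₀* s - p₁*)/(p₁*(1/p₀* - 1 - s)) are all nonnegative and satisfy: 1/(1 + w_{11} + w_{22}) = p₀*, p₀* w_{11}/(1 + w_{22} w_{12}) = p₁*, and p₀* w_{22}/(1 + w_{11} w_{21}) = p₂*. -/

import Mathlib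

/-- The one-parameter family of two-item model weights all reproducing the same marginal set
probabilities `(p₀, p₁, p₂)`, demonstrating underspecification. -/
theorem twoItem_underspecified_family (p0 p1 p2 : ℝ) (hp0 : 0 < p0) (hp1 : 0 < p1)
    (hp2 : 0 < p2) (hsum : p0 + p1 + p2 < 1)
    (s : ℝ) (hs1 : p1 / p0 < s) (hs2 : s < (1 - p0 - p2) / p0) :
    0 ≤ s ∧ 0 ≤ 1 / p0 - 1 - s ∧
    0 ≤ (1 - p0 - p2 - p0 * s) / (p2 * s) ∧
    0 ≤ (p0 * s - p1) / (p1 * (1 / p0 - 1 - s)) ∧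
    1 / (1 + s + (1 / p0 - 1 - s)) = p0 ∧
    p0 * s / (1 + (1 / p0 - 1 - s) * ((p0 * s - p1) / (p1 * (1 / p0 - 1 - s)))) = p1 ∧
    p0 * (1 / p0 - 1 - s) / (1 + s * ((1 - p0 - p2 - p0 * s) / (p2 * s))) = p2 := by
  have hs0 : 0 < s := lt_trans (div_pos hp1 hp0) hs1
  have h1 : p1 < p0 * s := by
    have := (div_lt_iff₀ hp0).mp hs1; nlinarith
  have h2 : p0 * s < 1 - p0 - p2 := by
    have := (lt_div_iff₀ hp0).mp hs2; nlinarith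
  have hnum2 : 0 < 1 - p0 - p2 - p0 * s := by linarith
  have hinv : 1 / p0 - 1 - s = (1 - p0 - p0 * s) / p0 := by
    field_simp
  have hn : 0 < 1 - p0 - p0 * s := by linarith
  have hw22 : 0 < 1 / p0 - 1 - s := by rw [hinv]; positivity
  refine ⟨hs0.le, hw22.le,
    le_of_lt (div_pos hnum2 (mul_pos hp2 hs0)),
    le_of_lt (div_pos (by linarith) (mul_pos hp1 hw22)), ?_, ?_, ?_⟩
  · have h : 1 + s + (1 / p0 - 1 - s) = 1 / p0 := by ring
    rw [h, one_div_one_div]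
  · have e12 : (1 / p0 - 1 - s) * ((p0 * s - p1) / (p1 * (1 / p0 - 1 - s)))
        = (p0 * s - p1) / p1 := by
      field_simp
    rw [e12]
    have h : 1 + (p0 * s - p1) / p1 = p0 * s / p1 := by
      field_simp
      ring
    rw [h]
    rw [div_div_eq_mul_div, mul_comm, mul_div_assoc, div_self (mul_pos hp0 hs0).ne', mul_one]
  · have e21 : s * ((1 - p0 - p2 - p0 * s) / (p2 * s)) = (1 - p0 - p2 - p0 * s) / p2 := by
      field_simp
    rw [e21]
    have h : 1 + (1 - p0 - p2 - p0 * s) / p2 = (1 - p0 - p0 * s) / p2 := by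
      field_simp
      ring
    have h2' : p0 * (1 / p0 - 1 - s) = 1 - p0 - p0 * s := by
      field_simp
    rw [h, h2']
    rw [div_div_eq_mul_div, mul_comm, mul_div_assoc, div_self hn.ne', mul_one]
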